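/- Let G be a topological group admitting a net (μ_i)_{i∈I} of Borel probability measures UEB-converging to invariance, and let d be a continuous pseudo-metric on a G-flow X. Then there exists a point x₀ ∈ X with sup_{g∈G} d(x₀, g·x₀) ≤ sup_{α>0} liminf_{i→I} sup_{x∈X} ObsDiam(G, d_{G,x}, μ_i; −α). -/

import Mathlib

open Filter Topology MeasureTheory Pointwise

/-- A net `(μ i)` of Borel probability measures on a topological group `G`
UEB-converges to invariance if, for every `g ∈ G` and every norm-bounded,
right-uniformly equicontinuous family `H` of bounded right-uniformly continuous
real-valued functions on `G`, `sup_{f ∈ H} |∫ f ∘ λ_g dμ_i − ∫ f dμ_i| → 0`. -/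
def UEBConvergesToInvariance {G ι : Type*} [Group G] [TopologicalSpace G]
    [MeasurableSpace G] (l : Filter ι) (μ : ι → Measure G) : Prop :=
  ∀ (g : G) (H : Set (G → ℝ)),
    (∃ C : ℝ, ∀ f ∈ H, ∀ x, |f x| ≤ C) →
    (∀ ε > 0, ∃ U ∈ 𝓝 (1 : G), ∀ f ∈ H, ∀ x y : G, y * x⁻¹ ∈ U → |f x - f y| ≤ ε) →
    ∀ ε > 0, ∀ᶠ i in l, ∀ f ∈ H,
      |∫ x, f (g * x) ∂(μ i) - ∫ x, f x ∂(μ i)| ≤ ε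

/-- The `α`-partial diameter of a Borel probability measure `ν` on `ℝ`:
the infimum of diameters of Borel sets of `ν`-measure at least `1 − α`. -/
noncomputable def partDiam (ν : MeasureTheory.Measure ℝ) (α : ℝ) : ENNReal :=
  ⨅ (B : Set ℝ) (_ : MeasurableSet B ∧ 1 - ENNReal.ofReal α ≤ ν B), EMetric.diam B

/-- Gromov's `α`-observable diameter of `(X, d, μ)`: the supremum of the partial
diameters of the push-forwards of `μ` under (measurable) `1`-Lipschitz functions
`(X, d) → ℝ`. -/
noncomputable def obsDiam {X : Type*} [MeasurableSpace X] (d : X → X → ℝ)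
    (μ : MeasureTheory.Measure X) (α : ℝ) : ENNReal :=
  ⨆ (f : X → ℝ) (_ : Measurable f ∧ ∀ x y, |f x - f y| ≤ d x y),
    partDiam (μ.map f) α

/- ### Auxiliary lemmas -/

/-- Monotonicity of the partial diameter in `α`. -/
lemma aux_partDiam_anti (ν : MeasureTheory.Measure ℝ) {α β : ℝ} (h : α ≤ β) :
    partDiam ν β ≤ partDiam ν α := by
  refine le_iInf fun B => le_iInf fun hB => ?_
  refine iInf_le_of_le B (iInf_le_of_le ⟨hB.1, ?_⟩ le_rfl)
  exact le_trans (tsub_le_tsub_left (ENNReal.ofReal_le_ofReal h) 1) hB.2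

/-- Monotonicity of the observable diameter in `α`. -/
lemma aux_obsDiam_anti {X : Type*} [MeasurableSpace X] (d : X → X → ℝ)
    (μ : MeasureTheory.Measure X) {α β : ℝ} (h : α ≤ β) :
    obsDiam d μ β ≤ obsDiam d μ α := by
  refine iSup_le fun f => iSup_le fun hf => ?_
  exact le_iSup_of_le f (le_iSup_of_le hf (aux_partDiam_anti _ h))

/-- Uniform near-invariance of a continuous function on a compact space under
group elements close to the identity. -/
lemma aux_unif_action {G X : Type*} [Monoid G] [TopologicalSpace G] [TopologicalSpace X]
    [CompactSpace X] [MulAction G X] [ContinuousSMul G X]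
    (χ : X → ℝ) (hχ : Continuous χ) {ε : ℝ} (hε : 0 < ε) :
    ∃ U ∈ 𝓝 (1 : G), ∀ u ∈ U, ∀ z : X, |χ (u • z) - χ z| ≤ ε := by
  have hcontF : Continuous fun p : G × X => |χ (p.1 • p.2) - χ p.2| :=
    ((hχ.comp continuous_smul).sub (hχ.comp continuous_snd)).abs
  have hO : IsOpen {p : G × X | |χ (p.1 • p.2) - χ p.2| < ε} :=
    isOpen_lt hcontF continuous_const
  have hsub : ({(1 : G)} : Set G) ×ˢ (Set.univ : Set X) ⊆
      {p : G × X | |χ (p.1 • p.2) - χ p.2| < ε} := by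
    rintro ⟨u, z⟩ ⟨hu, -⟩
    rcases Set.mem_singleton_iff.1 hu with rfl
    simp [one_smul, hε]
  obtain ⟨u, v, huo, -, h1u, htv, huv⟩ :=
    generalized_tube_lemma isCompact_singleton isCompact_univ hO hsub
  refine ⟨u, huo.mem_nhds (h1u rfl), fun g hg z => ?_⟩
  have hmem : (g, z) ∈ u ×ˢ v := ⟨hg, htv (Set.mem_univ z)⟩
  exact le_of_lt (huv hmem)

/-- Transfer a lower bound on the integral of a `[0,1]`-valued function vanishing
outside `S` to a lower bound on the measure of `S`. -/
lemma aux_mass_lower {Γ : Type*} [MeasurableSpace Γ] {μ : Measure Γ}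
    [IsProbabilityMeasure μ] {ψ : Γ → ℝ} (hψ : Measurable ψ)
    (h0 : ∀ h, 0 ≤ ψ h) (h1 : ∀ h, ψ h ≤ 1)
    {S : Set Γ} (hS : MeasurableSet S) (hsupp : ∀ h ∉ S, ψ h = 0)
    {c : ℝ} (hc : c ≤ ∫ h, ψ h ∂μ) : ENNReal.ofReal c ≤ μ S := by
  have hint : Integrable ψ μ := by
    refine Integrable.mono' (integrable_const 1) hψ.aestronglyMeasurable
      (ae_of_all _ fun h => ?_)
    rw [Real.norm_eq_abs, abs_of_nonneg (h0 h)]; exact h1 h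
  have hind : Integrable (S.indicator fun _ => (1 : ℝ)) μ := (integrable_const 1).indicator hS
  have hmono : ∫ h, ψ h ∂μ ≤ ∫ h, S.indicator (fun _ => (1 : ℝ)) h ∂μ := by
    refine integral_mono hint hind fun h => ?_
    by_cases hh : h ∈ S
    · simp [Set.indicator_of_mem hh, h1 h]
    · simp [Set.indicator_of_notMem hh, hsupp h hh]
  rw [integral_indicator_const (1 : ℝ) hS, smul_eq_mul, mul_one] at hmono
  exact ENNReal.ofReal_le_of_le_toReal (le_trans hc hmono)

/-- Lower bound on the partial diameter of a push-forward from two separated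
sets of measure `> α`. -/
lemma aux_partDiam_lower {Γ : Type*} [MeasurableSpace Γ] {μ : Measure Γ}
    [IsProbabilityMeasure μ] {f : Γ → ℝ} (hf : Measurable f) {a b α : ℝ}
    (hα : ENNReal.ofReal α ≤ 1)
    (hSa : ENNReal.ofReal α < μ {h | f h ≤ a})
    (hSb : ENNReal.ofReal α < μ {h | b ≤ f h}) :
    ENNReal.ofReal (b - a) ≤ partDiam (μ.map f) α := by
  refine le_iInf fun B => le_iInf fun hB => ?_
  obtain ⟨hBm, hBν⟩ := hB
  have hpre : 1 - ENNReal.ofReal α ≤ μ (f ⁻¹' B) := by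
    rwa [Measure.map_apply hf hBm] at hBν
  have key : ∀ S : Set Γ, MeasurableSet S → ENNReal.ofReal α < μ S →
      (f ⁻¹' B ∩ S).Nonempty := by
    intro S hSm hSμ
    rw [Set.nonempty_iff_ne_empty]
    intro hemp
    have hdisj : Disjoint (f ⁻¹' B) S := Set.disjoint_iff_inter_eq_empty.2 hemp
    have h1 : μ (f ⁻¹' B) ≤ μ Sᶜ := measure_mono hdisj.subset_compl_right
    have h2 : μ Sᶜ = 1 - μ S := by
      rw [measure_compl hSm (measure_ne_top μ S), measure_univ]
    have h3 : 1 - ENNReal.ofReal α ≤ 1 - μ S := le_trans hpre (h2 ▸ h1)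
    have h4 : (1 - ENNReal.ofReal α) + μ S ≤ 1 := by
      calc (1 - ENNReal.ofReal α) + μ S ≤ (1 - μ S) + μ S := add_le_add h3 le_rfl
        _ = 1 := tsub_add_cancel_of_le prob_le_one
    have hne : (1 : ENNReal) - ENNReal.ofReal α ≠ ⊤ :=
      ne_top_of_le_ne_top ENNReal.one_ne_top tsub_le_self
    have h5 : (1 : ENNReal) < (1 - ENNReal.ofReal α) + μ S := by
      calc (1 : ENNReal) = (1 - ENNReal.ofReal α) + ENNReal.ofReal α :=
            (tsub_add_cancel_of_le hα).symm
        _ < (1 - ENNReal.ofReal α) + μ S := ENNReal.add_lt_add_left hne hSμ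
    exact absurd h4 (not_le.mpr h5)
  have hma : MeasurableSet {h : Γ | f h ≤ a} := hf measurableSet_Iic
  have hmb : MeasurableSet {h : Γ | b ≤ f h} := hf measurableSet_Ici
  obtain ⟨h₁, hB₁, hS₁⟩ := key _ hma hSa
  obtain ⟨h₂, hB₂, hS₂⟩ := key _ hmb hSb
  have hdiam : edist (f h₂) (f h₁) ≤ EMetric.diam B :=
    EMetric.edist_le_diam_of_mem hB₂ hB₁
  refine le_trans ?_ hdiam
  rw [edist_dist, Real.dist_eq]
  refine ENNReal.ofReal_le_ofReal ?_
  have : b - a ≤ f h₂ - f h₁ := sub_le_sub hS₂ hS₁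
  exact le_trans this (le_abs_self _)

/-- There is a point all of whose open neighbourhoods have orbital measure
bounded away from zero along the ultrafilter. -/
lemma aux_anchor {G ι X : Type*} [MeasurableSpace G] [TopologicalSpace X]
    [MeasurableSpace X] [OpensMeasurableSpace X]
    [CompactSpace X] [T2Space X] [Nonempty X]
    (U : Ultrafilter ι) (μ : ι → Measure G) (hprob : ∀ i, IsProbabilityMeasure (μ i))
    (q : G → X) (hq : Measurable q) :
    ∃ z₀ : X, ∀ V : Set X, IsOpen V → z₀ ∈ V →
      ∃ (χ : X → ℝ) (c : ℝ), Continuous χ ∧ (∀ w, 0 ≤ χ w) ∧ (∀ w, χ w ≤ 1) ∧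
        (∀ w, w ∉ V → χ w = 0) ∧ 0 < c ∧ {i | c ≤ ∫ h, χ (q h) ∂(μ i)} ∈ U := by
  by_contra hcon
  push_neg at hcon
  choose Vf hVo hVmem hVbad using hcon
  have hshrink : ∀ z : X, ∃ Wz : Set X, IsOpen Wz ∧ z ∈ Wz ∧ closure Wz ⊆ Vf z := by
    intro z
    obtain ⟨Wz, hWo, hzW, hWcl⟩ := normal_exists_closure_subset
      (isClosed_singleton (x := z)) (hVo z) (Set.singleton_subset_iff.2 (hVmem z))
    exact ⟨Wz, hWo, Set.singleton_subset_iff.1 hzW, hWcl⟩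
  choose Wf hWo hWmem hWcl using hshrink
  obtain ⟨T, hT⟩ := isCompact_univ.elim_finite_subcover Wf hWo
    (fun z _ => Set.mem_iUnion.2 ⟨z, hWmem z⟩)
  have hTne : T.Nonempty := by
    obtain ⟨z⟩ := ‹Nonempty X›
    obtain ⟨z', hz'⟩ := Set.mem_iUnion.1 (hT (Set.mem_univ z))
    obtain ⟨hz'T, -⟩ := Set.mem_iUnion.1 hz'
    exact ⟨z', hz'T⟩
  have hury : ∀ z : X, ∃ χ : X → ℝ, Continuous χ ∧ (∀ w, 0 ≤ χ w) ∧ (∀ w, χ w ≤ 1) ∧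
      (∀ w, w ∉ Vf z → χ w = 0) ∧ (∀ w ∈ closure (Wf z), χ w = 1) := by
    intro z
    have hdisj : Disjoint ((Vf z)ᶜ) (closure (Wf z)) := by
      rw [Set.disjoint_left]
      intro w hw hwcl
      exact hw (hWcl z hwcl)
    obtain ⟨fz, hf0, hf1, hf01⟩ := exists_continuous_zero_one_of_isClosed
      (hVo z).isClosed_compl isClosed_closure hdisj
    refine ⟨fz, fz.continuous, fun w => (hf01 w).1, fun w => (hf01 w).2, ?_, ?_⟩
    · intro w hw
      simpa using hf0 (Set.mem_compl hw)
    · intro w hw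
      simpa using hf1 hw
  choose χf hχc hχ0 hχ1 hχsupp hχ1on using hury
  set N : ℝ := (T.card : ℝ) with hN
  have hNpos : 0 < N := by
    rw [hN]
    exact_mod_cast Finset.card_pos.2 hTne
  have hptsum : ∀ w : X, (1 : ℝ) ≤ ∑ z ∈ T, χf z w := by
    intro w
    obtain ⟨z, hz⟩ := Set.mem_iUnion.1 (hT (Set.mem_univ w))
    obtain ⟨hzT, hzw⟩ := Set.mem_iUnion.1 hz
    calc (1 : ℝ) = χf z w := (hχ1on z w (subset_closure hzw)).symm
      _ ≤ ∑ z ∈ T, χf z w := Finset.single_le_sum (fun z' _ => hχ0 z' w) hzT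
  have hkey : ∀ i : ι, ∃ z ∈ T, 1 / N ≤ ∫ h, χf z (q h) ∂(μ i) := by
    intro i
    haveI := hprob i
    have hint : ∀ z : X, Integrable (fun h => χf z (q h)) (μ i) := by
      intro z
      refine Integrable.mono' (integrable_const 1)
        (((hχc z).measurable.comp hq).aestronglyMeasurable) (ae_of_all _ fun h => ?_)
      rw [Real.norm_eq_abs, abs_of_nonneg (hχ0 z _)]; exact hχ1 z _
    by_contra hno
    push_neg at hno
    have hsum : ∑ z ∈ T, ∫ h, χf z (q h) ∂(μ i) < ∑ z ∈ T, 1 / N :=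
      Finset.sum_lt_sum_of_nonempty hTne fun z hz => hno z hz
    have h1 : (1 : ℝ) ≤ ∫ h, ∑ z ∈ T, χf z (q h) ∂(μ i) := by
      have := integral_mono (integrable_const (1 : ℝ))
        (integrable_finset_sum T fun z _ => hint z) (fun h => hptsum (q h))
      simpa using this
    rw [integral_finset_sum T fun z _ => hint z] at h1
    have h2 : ∑ _z ∈ T, (1 : ℝ) / N = 1 := by
      rw [Finset.sum_const, nsmul_eq_mul, hN]
      field_simp
    linarith
  have hUnion : (⋃ z ∈ (T : Set X), {i | 1 / N ≤ ∫ h, χf z (q h) ∂(μ i)}) ∈ U := by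
    refine Filter.mem_of_superset Filter.univ_mem fun i _ => ?_
    obtain ⟨z, hzT, hle⟩ := hkey i
    exact Set.mem_biUnion hzT hle
  obtain ⟨z, hzT, hzU⟩ := (Ultrafilter.finite_biUnion_mem_iff T.finite_toSet).1 hUnion
  exact hVbad z (χf z) (1 / N) (hχc z) (hχ0 z) (hχ1 z) (hχsupp z)
    (by positivity) hzU

/- ### Main theorem -/

theorem stmt18 {G X ι : Type*} [Group G] [TopologicalSpace G] [IsTopologicalGroup G]
    [MeasurableSpace G] [BorelSpace G]
    [TopologicalSpace X] [CompactSpace X] [T2Space X] [Nonempty X]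
    [MeasurableSpace X] [BorelSpace X]
    [MulAction G X] [ContinuousSMul G X]
    (l : Filter ι) [l.NeBot] (μ : ι → Measure G)
    (hprob : ∀ i, IsProbabilityMeasure (μ i))
    (hUEB : UEBConvergesToInvariance l μ)
    (d : X → X → ℝ) (hd0 : ∀ x, d x x = 0) (hsymm : ∀ x y, d x y = d y x)
    (htri : ∀ x y z, d x z ≤ d x y + d y z)
    (hcont : Continuous (fun p : X × X => d p.1 p.2)) :
    ∃ x₀ : X, ∀ g : G, ENNReal.ofReal (d x₀ (g • x₀)) ≤
      ⨆ (α : ℝ) (_ : 0 < α), l.liminf (fun i =>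
        ⨆ x : X, obsDiam (fun g h : G => d (g • x) (h • x)) (μ i) α) := by
  classical
  set R : ENNReal := ⨆ (α : ℝ) (_ : 0 < α), l.liminf (fun i =>
      ⨆ x : X, obsDiam (fun g h : G => d (g • x) (h • x)) (μ i) α) with hRdef
  by_cases hRtop : R = ⊤
  · exact ⟨Classical.arbitrary X, fun g => hRtop ▸ le_top⟩
  have hcontg : ∀ g : G, Continuous fun z : X => d z (g • z) := fun g =>
    hcont.comp (continuous_id.prodMk
      ((continuous_const.smul continuous_id : Continuous fun z : X => g • z)))
  -- Core claim
  have claim : ∀ (E : Finset G) (r : ℝ), R < ENNReal.ofReal r →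
      (⋂ g ∈ E, {z : X | d z (g • z) ≤ r}).Nonempty := by
    intro E r hr
    by_contra hne
    have hcover : ∀ z : X, ∃ g ∈ E, r < d z (g • z) := by
      intro z
      by_contra hz
      push_neg at hz
      exact hne ⟨z, Set.mem_iInter₂.2 fun g hg => hz g hg⟩
    have hrR : R.toReal < r := (ENNReal.lt_ofReal_iff_toReal_lt hRtop).1 hr
    have hRt0 : (0 : ℝ) ≤ R.toReal := ENNReal.toReal_nonneg
    set r' : ℝ := (R.toReal + r) / 2 with hr'def
    have hr'R : R.toReal < r' := by rw [hr'def]; linarith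
    have hr'r : r' < r := by rw [hr'def]; linarith
    have hr'pos : 0 < r' := by rw [hr'def]; linarith
    have hRr' : R < ENNReal.ofReal r' := (ENNReal.lt_ofReal_iff_toReal_lt hRtop).2 hr'R
    set t : ℝ := (r - r') / 2 with htdef
    have ht : 0 < t := by rw [htdef]; linarith
    set Bad : ℕ → Set ι := fun n => {i | (⨆ x : X,
        obsDiam (fun g h : G => d (g • x) (h • x)) (μ i) (1 / (n + 1)))
        < ENNReal.ofReal r'} with hBdef
    have hfreq : ∀ n : ℕ, ∃ᶠ i in l, i ∈ Bad n := by
      intro n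
      have hpos : (0 : ℝ) < 1 / (n + 1) := by positivity
      have hle : l.liminf (fun i => ⨆ x : X,
          obsDiam (fun g h : G => d (g • x) (h • x)) (μ i) (1 / (n + 1))) ≤ R := by
        rw [hRdef]
        exact le_iSup_of_le (1 / (n + 1)) (le_iSup_of_le hpos le_rfl)
      exact frequently_lt_of_liminf_lt (h := lt_of_le_of_lt hle hRr')
    have hBanti : ∀ {m n : ℕ}, m ≤ n → Bad n ⊆ Bad m := by
      intro m n hmn i hi
      have h1n : (1 : ℝ) / (n + 1) ≤ 1 / (m + 1) := by
        apply one_div_le_one_div_of_le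
        · positivity
        · exact_mod_cast by omega
      simp only [hBdef, Set.mem_setOf_eq] at hi ⊢
      refine lt_of_le_of_lt ?_ hi
      exact iSup_mono fun x => aux_obsDiam_anti _ _ h1n
    have hFne : (l ⊓ ⨅ n : ℕ, 𝓟 (Bad n)).NeBot := by
      rw [Filter.inf_neBot_iff]
      intro s hs v hv
      have hdir : Directed (· ≥ ·) (fun n : ℕ => 𝓟 (Bad n)) := fun m n =>
        ⟨max m n, Filter.principal_mono.2 (hBanti (le_max_left m n)),
          Filter.principal_mono.2 (hBanti (le_max_right m n))⟩
      obtain ⟨n, hn⟩ := (Filter.mem_iInf_of_directed hdir v).1 hv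
      obtain ⟨i, hiB, his⟩ := ((hfreq n).and_eventually hs).exists
      exact ⟨i, his, hn hiB⟩
    set U : Ultrafilter ι := @Ultrafilter.of ι (l ⊓ ⨅ n : ℕ, 𝓟 (Bad n)) hFne with hUdef
    have hUle : (U : Filter ι) ≤ l ⊓ ⨅ n : ℕ, 𝓟 (Bad n) := Ultrafilter.of_le _
    have hUl : ∀ s ∈ l, s ∈ U := fun s hs => hUle (mem_inf_of_left hs)
    have hUBad : ∀ n, Bad n ∈ U := fun n =>
      hUle (mem_inf_of_right (mem_iInf_of_mem n (mem_principal_self _)))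
    obtain ⟨x₁⟩ := ‹Nonempty X›
    have horb : Continuous fun h : G => h • x₁ := continuous_id.smul continuous_const
    obtain ⟨z₀, hz₀⟩ := aux_anchor U μ hprob (fun h : G => h • x₁) horb.measurable
    obtain ⟨g₀, hg₀E, hg₀d⟩ := hcover z₀
    set V : Set X := {w | d w z₀ < t} with hVdef
    set V' : Set X := {w | d w (g₀ • z₀) < t} with hV'def
    set W : Set X := {w | d (g₀ • w) (g₀ • z₀) < t} with hWdef
    have hVo : IsOpen V :=
      isOpen_lt (hcont.comp (continuous_id.prodMk continuous_const)) continuous_const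
    have hV'o : IsOpen V' :=
      isOpen_lt (hcont.comp (continuous_id.prodMk continuous_const)) continuous_const
    have hWo : IsOpen W := by
      have : Continuous fun w : X => d (g₀ • w) (g₀ • z₀) :=
        hcont.comp (((continuous_const.smul continuous_id :
          Continuous fun w : X => g₀ • w)).prodMk continuous_const)
      exact isOpen_lt this continuous_const
    have hzV : z₀ ∈ V := by
      show d z₀ z₀ < t
      rw [hd0]; exact ht
    have hzW : z₀ ∈ W := by
      show d (g₀ • z₀) (g₀ • z₀) < t
      rw [hd0]; exact ht
    obtain ⟨χ₁, c₁, hχ₁c, hχ₁0, hχ₁1, hχ₁supp, hc₁pos, hT₁⟩ := hz₀ V hVo hzV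
    obtain ⟨χ₂, c₂, hχ₂c, hχ₂0, hχ₂1, hχ₂supp, hc₂pos, hT₂⟩ := hz₀ W hWo hzW
    -- UEB applied to the singleton family
    have hbound : ∃ C : ℝ, ∀ f ∈ ({fun h : G => χ₂ (h • x₁)} : Set (G → ℝ)),
        ∀ x, |f x| ≤ C := by
      refine ⟨1, ?_⟩
      rintro f hf x
      rcases Set.mem_singleton_iff.1 hf with rfl
      rw [abs_of_nonneg (hχ₂0 _)]
      exact hχ₂1 _
    have hequi : ∀ ε > 0, ∃ Uu ∈ 𝓝 (1 : G),
        ∀ f ∈ ({fun h : G => χ₂ (h • x₁)} : Set (G → ℝ)),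
          ∀ x y : G, y * x⁻¹ ∈ Uu → |f x - f y| ≤ ε := by
      intro ε hε
      obtain ⟨Uu, hUu, hp⟩ := aux_unif_action (G := G) χ₂ hχ₂c hε
      refine ⟨Uu, hUu, ?_⟩
      rintro f hf x y hxy
      rcases Set.mem_singleton_iff.1 hf with rfl
      have hy : y • x₁ = (y * x⁻¹) • (x • x₁) := by
        rw [← mul_smul, inv_mul_cancel_right]
      show |χ₂ (x • x₁) - χ₂ (y • x₁)| ≤ ε
      rw [hy, abs_sub_comm]
      exact hp _ hxy _
    have hev := hUEB g₀⁻¹ _ hbound hequi (c₂ / 2) (by positivity)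
    have hA3 : {i | ∀ f ∈ ({fun h : G => χ₂ (h • x₁)} : Set (G → ℝ)),
        |∫ x, f (g₀⁻¹ * x) ∂(μ i) - ∫ x, f x ∂(μ i)| ≤ c₂ / 2} ∈ U := hUl _ hev
    obtain ⟨n₀, hn₀⟩ := exists_nat_one_div_lt (show (0 : ℝ) < min c₁ (c₂ / 2) by positivity)
    have hmem : ({i | c₁ ≤ ∫ h, χ₁ (h • x₁) ∂(μ i)} ∩
        ({i | c₂ ≤ ∫ h, χ₂ (h • x₁) ∂(μ i)} ∩
        ({i | ∀ f ∈ ({fun h : G => χ₂ (h • x₁)} : Set (G → ℝ)),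
          |∫ x, f (g₀⁻¹ * x) ∂(μ i) - ∫ x, f x ∂(μ i)| ≤ c₂ / 2} ∩ Bad n₀))) ∈ U :=
      inter_mem hT₁ (inter_mem hT₂ (inter_mem hA3 (hUBad n₀)))
    obtain ⟨i₀, hi₁, hi₂, hi₃, hi₄⟩ := U.nonempty_of_mem hmem
    haveI : IsProbabilityMeasure (μ i₀) := hprob i₀
    -- masses of the two separated sets
    have hmass1 : ENNReal.ofReal c₁ ≤ μ i₀ {h : G | h • x₁ ∈ V} := by
      refine aux_mass_lower (ψ := fun h => χ₁ (h • x₁))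
        (hχ₁c.measurable.comp horb.measurable) (fun h => hχ₁0 _) (fun h => hχ₁1 _)
        ((hVo.preimage horb).measurableSet) (fun h hh => hχ₁supp _ hh) hi₁
    have hint2 : c₂ / 2 ≤ ∫ h, χ₂ ((g₀⁻¹ * h) • x₁) ∂(μ i₀) := by
      have h3 := hi₃ _ (Set.mem_singleton _)
      rw [abs_le] at h3
      have h2 : c₂ ≤ ∫ h, χ₂ (h • x₁) ∂(μ i₀) := hi₂
      have := h3.1
      linarith
    have hmass2 : ENNReal.ofReal (c₂ / 2) ≤ μ i₀ {h : G | h • x₁ ∈ V'} := by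
      refine aux_mass_lower (ψ := fun h => χ₂ ((g₀⁻¹ * h) • x₁))
        (hχ₂c.measurable.comp (horb.measurable.comp (measurable_const_mul g₀⁻¹)))
        (fun h => hχ₂0 _) (fun h => hχ₂1 _)
        ((hV'o.preimage horb).measurableSet) ?_ hint2
      intro h hh
      apply hχ₂supp
      intro hW'
      apply hh
      have : g₀ • ((g₀⁻¹ * h) • x₁) = h • x₁ := by
        rw [← mul_smul, mul_inv_cancel_left]
      show h • x₁ ∈ V'
      rw [← this]
      exact hW'
    -- the observable
    set f : G → ℝ := fun h => d (h • x₁) z₀ with hfdef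
    have hfm : Measurable f :=
      (hcont.comp (horb.prodMk continuous_const)).measurable
    have hflip : ∀ a b : G, |f a - f b| ≤ d (a • x₁) (b • x₁) := by
      intro a b
      rw [abs_sub_le_iff]
      constructor
      · have := htri (a • x₁) (b • x₁) z₀
        simp only [hfdef]
        linarith
      · have h1 := htri (b • x₁) (a • x₁) z₀
        have h2 := hsymm (b • x₁) (a • x₁)
        simp only [hfdef]
        linarith
    set αn : ℝ := 1 / (n₀ + 1) with hαndef
    have hαn_pos : 0 < αn := by rw [hαndef]; positivity
    have hαn_le1 : ENNReal.ofReal αn ≤ 1 := by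
      rw [ENNReal.ofReal_le_one, hαndef]
      rw [div_le_one (by positivity)]
      linarith [Nat.cast_nonneg (α := ℝ) n₀]
    have hSa : ENNReal.ofReal αn < μ i₀ {h : G | f h ≤ t} := by
      refine lt_of_lt_of_le ?_ (le_trans hmass1 (measure_mono ?_))
      · exact (ENNReal.ofReal_lt_ofReal_iff hc₁pos).2
          (lt_of_lt_of_le hn₀ (min_le_left _ _))
      · intro h hh
        exact le_of_lt (show d (h • x₁) z₀ < t from hh)
    have hSb : ENNReal.ofReal αn < μ i₀ {h : G | r - t ≤ f h} := by
      refine lt_of_lt_of_le ?_ (le_trans hmass2 (measure_mono ?_))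
      · exact (ENNReal.ofReal_lt_ofReal_iff (by positivity)).2
          (lt_of_lt_of_le hn₀ (min_le_right _ _))
      · intro h hh
        have hh' : d (h • x₁) (g₀ • z₀) < t := hh
        have h1 := htri z₀ (h • x₁) (g₀ • z₀)
        have h2 := hsymm z₀ (h • x₁)
        show r - t ≤ f h
        simp only [hfdef]
        linarith
    have hpd : ENNReal.ofReal ((r - t) - t) ≤ partDiam ((μ i₀).map f) αn :=
      aux_partDiam_lower hfm hαn_le1 hSa hSb
    have hrt : (r - t) - t = r' := by rw [htdef]; ring
    have hobs : ENNReal.ofReal r' ≤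
        obsDiam (fun g h : G => d (g • x₁) (h • x₁)) (μ i₀) αn := by
      rw [← hrt]
      refine le_trans hpd ?_
      exact le_iSup_of_le f (le_iSup_of_le ⟨hfm, hflip⟩ le_rfl)
    have hsup : ENNReal.ofReal r' ≤
        ⨆ x : X, obsDiam (fun g h : G => d (g • x) (h • x)) (μ i₀) αn :=
      le_trans hobs (le_iSup (fun x : X =>
        obsDiam (fun g h : G => d (g • x) (h • x)) (μ i₀) αn) x₁)
    have hbad : (⨆ x : X, obsDiam (fun g h : G => d (g • x) (h • x)) (μ i₀) αn)
        < ENNReal.ofReal r' := hi₄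
    exact absurd hbad (not_lt.2 hsup)
  -- From the claim, a compactness argument produces the point x₀
  have hJne : Nonempty {p : Finset G × ℝ // R < ENNReal.ofReal p.2} := by
    refine ⟨⟨(∅, R.toReal + 1), ?_⟩⟩
    exact (ENNReal.lt_ofReal_iff_toReal_lt hRtop).2
      (show R.toReal < R.toReal + 1 by linarith)
  set Z : {p : Finset G × ℝ // R < ENNReal.ofReal p.2} → Set X :=
    fun p => ⋂ g ∈ p.1.1, {z : X | d z (g • z) ≤ p.1.2} with hZdef
  have hZne : ∀ p, (Z p).Nonempty := fun p => claim p.1.1 p.1.2 p.2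
  have hZcl : ∀ p, IsClosed (Z p) := fun p =>
    isClosed_biInter fun g _ => isClosed_le (hcontg g) continuous_const
  have hZcp : ∀ p, IsCompact (Z p) := fun p => (hZcl p).isCompact
  have hdir : Directed (· ⊇ ·) Z := by
    rintro ⟨⟨E₁, r₁⟩, h₁⟩ ⟨⟨E₂, r₂⟩, h₂⟩
    have hmin : R < ENNReal.ofReal (min r₁ r₂) := by
      rcases min_cases r₁ r₂ with ⟨h, -⟩ | ⟨h, -⟩ <;> rw [h]
      exacts [h₁, h₂]
    refine ⟨⟨(E₁ ∪ E₂, min r₁ r₂), hmin⟩, ?_, ?_⟩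
    · intro z hz
      refine Set.mem_iInter₂.2 fun g hg => ?_
      have hle := Set.mem_iInter₂.1 hz g (Finset.mem_union_left _ hg)
      exact le_trans (show d z (g • z) ≤ min r₁ r₂ from hle) (min_le_left _ _)
    · intro z hz
      refine Set.mem_iInter₂.2 fun g hg => ?_
      have hle := Set.mem_iInter₂.1 hz g (Finset.mem_union_right _ hg)
      exact le_trans (show d z (g • z) ≤ min r₁ r₂ from hle) (min_le_right _ _)
  obtain ⟨x₀, hx₀⟩ := IsCompact.nonempty_iInter_of_directed_nonempty_isCompact_isClosed
    Z hdir hZne hZcp hZcl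
  refine ⟨x₀, fun g => ?_⟩
  by_contra hcon
  rw [not_le] at hcon
  have hD : R.toReal < d x₀ (g • x₀) := (ENNReal.lt_ofReal_iff_toReal_lt hRtop).1 hcon
  set rr : ℝ := (R.toReal + d x₀ (g • x₀)) / 2 with hrrdef
  have h1 : R < ENNReal.ofReal rr := by
    refine (ENNReal.lt_ofReal_iff_toReal_lt hRtop).2 ?_
    rw [hrrdef]; linarith
  have h2 : d x₀ (g • x₀) ≤ rr := by
    have hmem := Set.mem_iInter.1 hx₀ ⟨({g}, rr), h1⟩
    have := Set.mem_iInter₂.1 hmem g (Finset.mem_singleton_self g)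
    exact this
  rw [hrrdef] at h2
  linarith
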